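/- Let V be a real inner product space of finite dimension n ≥ 4 and let R be an algebraic curvature tensor on V. If for every orthonormal four-frame {e₁,e₂,e₃,e₄} in V one has R(e₁,e₃,e₁,e₃) + R(e₁,e₄,e₁,e₄) + R(e₂,e₃,e₂,e₃) + R(e₂,e₄,e₂,e₄) ≥ (1/2)·(R(e₁,e₂,e₁,e₂) + R(e₃,e₄,e₃,e₄)), then R has nonnegative isotropic curvature, i.e. for every orthonormal four-frame {e₁,e₂,e₃,e₄} in V one has R(e₁,e₃,e₁,e₃) + R(e₁,e₄,e₁,e₄) + R(e₂,e₃,e₂,e₃) + R(e₂,e₄,e₂,e₄) − 2·R(e₁,e₂,e₃,e₄) ≥ 0. -/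

import Mathlib

open scoped RealInnerProductSpace

variable {V : Type*} [NormedAddCommGroup V] [InnerProductSpace ℝ V]

/-- An algebraic curvature tensor on a real inner product space `V`:
an `ℝ`-multilinear map `V × V × V × V → ℝ` with the standard symmetries and
the first Bianchi identity. -/
def IsCurvatureTensor (R : V →ₗ[ℝ] V →ₗ[ℝ] V →ₗ[ℝ] V →ₗ[ℝ] ℝ) : Prop :=
  (∀ X Y Z W : V, R X Y Z W = - R Y X Z W) ∧
  (∀ X Y Z W : V, R X Y Z W = - R X Y W Z) ∧
  (∀ X Y Z W : V, R X Y Z W = R Z W X Y) ∧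
  (∀ X Y Z W : V, R X Y Z W + R X Z W Y + R X W Y Z = 0)

/-- An orthonormal four-frame: four pairwise orthogonal unit vectors. -/
def OrthonormalFrame4 (e₁ e₂ e₃ e₄ : V) : Prop :=
  ‖e₁‖ = 1 ∧ ‖e₂‖ = 1 ∧ ‖e₃‖ = 1 ∧ ‖e₄‖ = 1 ∧
  ⟪e₁, e₂⟫ = 0 ∧ ⟪e₁, e₃⟫ = 0 ∧ ⟪e₁, e₄⟫ = 0 ∧
  ⟪e₂, e₃⟫ = 0 ∧ ⟪e₂, e₄⟫ = 0 ∧ ⟪e₃, e₄⟫ = 0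

set_option maxHeartbeats 2000000 in
theorem stmt_1 {V : Type*} [NormedAddCommGroup V] [InnerProductSpace ℝ V]
    [FiniteDimensional ℝ V] (hdim : 4 ≤ Module.finrank ℝ V)
    (R : V →ₗ[ℝ] V →ₗ[ℝ] V →ₗ[ℝ] V →ₗ[ℝ] ℝ) (hR : IsCurvatureTensor R)
    (hyp : ∀ e₁ e₂ e₃ e₄ : V, OrthonormalFrame4 e₁ e₂ e₃ e₄ →
      R e₁ e₃ e₁ e₃ + R e₁ e₄ e₁ e₄ + R e₂ e₃ e₂ e₃ + R e₂ e₄ e₂ e₄ ≥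
        (1 / 2) * (R e₁ e₂ e₁ e₂ + R e₃ e₄ e₃ e₄)) :
    ∀ e₁ e₂ e₃ e₄ : V, OrthonormalFrame4 e₁ e₂ e₃ e₄ →
      R e₁ e₃ e₁ e₃ + R e₁ e₄ e₁ e₄ + R e₂ e₃ e₂ e₃ + R e₂ e₄ e₂ e₄
        - 2 * R e₁ e₂ e₃ e₄ ≥ 0 := by
  obtain ⟨ha, hb, hc, hbianchi⟩ := hR
  have A1 : ∀ X Y Z W : V, R Y X Z W = -R X Y Z W := fun X Y Z W => ha Y X Z W
  have A2 : ∀ X Y Z W : V, R X Y W Z = -R X Y Z W := fun X Y Z W => hb X Y W Z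
  have A3 : ∀ X Y Z W : V, R Y X W Z = R X Y Z W := fun X Y Z W => by
    have h1 := ha Y X W Z; have h2 := hb X Y Z W; linarith
  have A4 : ∀ X Y Z W : V, R Z W X Y = R X Y Z W := fun X Y Z W => hc Z W X Y
  have A5 : ∀ X Y Z W : V, R W Z X Y = -R X Y Z W := fun X Y Z W => by
    have h1 := A1 Z W X Y; have h2 := A4 X Y Z W; linarith
  have A6 : ∀ X Y Z W : V, R Z W Y X = -R X Y Z W := fun X Y Z W => by
    have h1 := A2 Z W X Y; have h2 := A4 X Y Z W; linarith
  have A7 : ∀ X Y Z W : V, R W Z Y X = R X Y Z W := fun X Y Z W => by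
    have h1 := A3 Z W X Y; have h2 := A4 X Y Z W; linarith
  have Z1 : ∀ X Z W : V, R X X Z W = 0 := fun X Z W => by
    have h1 := ha X X Z W; linarith
  have Z2 : ∀ X Y Z : V, R X Y Z Z = 0 := fun X Y Z => by
    have h1 := hb X Y Z Z; linarith
  have sqrt2_pos : (0:ℝ) < Real.sqrt 2 := Real.sqrt_pos.mpr (by norm_num)
  set r : ℝ := (Real.sqrt 2)⁻¹ with hrdef
  have hr2 : r * r = 1/2 := by
    rw [hrdef, ← mul_inv, Real.mul_self_sqrt (by norm_num)]; norm_num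
  have key : ∀ a b : V, R (r • a) (r • b) (r • a) (r • b) = 1/4 * R a b a b := by
    intro a b
    simp only [map_smul, LinearMap.smul_apply, smul_eq_mul]
    linear_combination (r * r + 1/2) * (R a b a b) * hr2
  have hyp' : ∀ v₁ v₂ v₃ v₄ : V, ‖v₁‖ = Real.sqrt 2 → ‖v₂‖ = Real.sqrt 2 →
      ‖v₃‖ = Real.sqrt 2 → ‖v₄‖ = Real.sqrt 2 →
      ⟪v₁, v₂⟫ = 0 → ⟪v₁, v₃⟫ = 0 → ⟪v₁, v₄⟫ = 0 →
      ⟪v₂, v₃⟫ = 0 → ⟪v₂, v₄⟫ = 0 → ⟪v₃, v₄⟫ = 0 →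
      R v₁ v₃ v₁ v₃ + R v₁ v₄ v₁ v₄ + R v₂ v₃ v₂ v₃ + R v₂ v₄ v₂ v₄ ≥
        (1/2) * (R v₁ v₂ v₁ v₂ + R v₃ v₄ v₃ v₄) := by
    intro v₁ v₂ v₃ v₄ n1 n2 n3 n4 o12 o13 o14 o23 o24 o34
    have hnorm : ∀ v : V, ‖v‖ = Real.sqrt 2 → ‖r • v‖ = 1 := by
      intro v hv
      rw [norm_smul, hv, Real.norm_eq_abs, abs_of_pos (by positivity),
        inv_mul_cancel₀ (ne_of_gt sqrt2_pos)]
    have hinner : ∀ a b : V, ⟪a, b⟫ = 0 → ⟪r • a, r • b⟫ = 0 := by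
      intro a b hab
      rw [real_inner_smul_left, real_inner_smul_right, hab]; ring
    have hh := hyp (r • v₁) (r • v₂) (r • v₃) (r • v₄)
      ⟨hnorm _ n1, hnorm _ n2, hnorm _ n3, hnorm _ n4, hinner _ _ o12, hinner _ _ o13,
        hinner _ _ o14, hinner _ _ o23, hinner _ _ o24, hinner _ _ o34⟩
    rw [key, key, key, key, key, key] at hh
    linarith
  intro e₁ e₂ e₃ e₄ hfr
  have h0 := hyp e₁ e₂ e₃ e₄ hfr
  obtain ⟨h1, h2, h3, h4, i12, i13, i14, i23, i24, i34⟩ := hfr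
  have i11 : ⟪e₁, e₁⟫ = 1 := by rw [real_inner_self_eq_norm_sq, h1]; norm_num
  have i22 : ⟪e₂, e₂⟫ = 1 := by rw [real_inner_self_eq_norm_sq, h2]; norm_num
  have i33 : ⟪e₃, e₃⟫ = 1 := by rw [real_inner_self_eq_norm_sq, h3]; norm_num
  have i44 : ⟪e₄, e₄⟫ = 1 := by rw [real_inner_self_eq_norm_sq, h4]; norm_num
  have i21 : ⟪e₂, e₁⟫ = 0 := by rw [real_inner_comm]; exact i12
  have i31 : ⟪e₃, e₁⟫ = 0 := by rw [real_inner_comm]; exact i13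
  have i41 : ⟪e₄, e₁⟫ = 0 := by rw [real_inner_comm]; exact i14
  have i32 : ⟪e₃, e₂⟫ = 0 := by rw [real_inner_comm]; exact i23
  have i42 : ⟪e₄, e₂⟫ = 0 := by rw [real_inner_comm]; exact i24
  have i43 : ⟪e₄, e₃⟫ = 0 := by rw [real_inner_comm]; exact i34
  have nsum : ∀ a b : V, ‖a‖ = 1 → ‖b‖ = 1 → ⟪a, b⟫ = 0 → ‖a + b‖ = Real.sqrt 2 := by
    intro a b haa hbb hab
    have hsq : ‖a + b‖ ^ 2 = 2 := by rw [norm_add_sq_real, haa, hbb, hab]; ring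
    rw [← Real.sqrt_sq (norm_nonneg (a + b)), hsq]
  have nsub : ∀ a b : V, ‖a‖ = 1 → ‖b‖ = 1 → ⟪a, b⟫ = 0 → ‖a - b‖ = Real.sqrt 2 := by
    intro a b haa hbb hab
    have hsq : ‖a - b‖ ^ 2 = 2 := by rw [norm_sub_sq_real, haa, hbb, hab]; ring
    rw [← Real.sqrt_sq (norm_nonneg (a - b)), hsq]
  have oB12 : ⟪e₁ + e₃, e₂ + e₄⟫ = 0 := by simp [inner_add_left, inner_add_right, inner_sub_left, inner_sub_right, i11, i22, i33, i44, i12, i13, i14, i23, i24, i34, i21, i31, i41, i32, i42, i43]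
  have oB13 : ⟪e₁ + e₃, e₁ - e₃⟫ = 0 := by simp [inner_add_left, inner_add_right, inner_sub_left, inner_sub_right, i11, i22, i33, i44, i12, i13, i14, i23, i24, i34, i21, i31, i41, i32, i42, i43, h1, h2, h3, h4]
  have oB14 : ⟪e₁ + e₃, e₂ - e₄⟫ = 0 := by simp [inner_add_left, inner_add_right, inner_sub_left, inner_sub_right, i11, i22, i33, i44, i12, i13, i14, i23, i24, i34, i21, i31, i41, i32, i42, i43]
  have oB23 : ⟪e₂ + e₄, e₁ - e₃⟫ = 0 := by simp [inner_add_left, inner_add_right, inner_sub_left, inner_sub_right, i11, i22, i33, i44, i12, i13, i14, i23, i24, i34, i21, i31, i41, i32, i42, i43]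
  have oB24 : ⟪e₂ + e₄, e₂ - e₄⟫ = 0 := by simp [inner_add_left, inner_add_right, inner_sub_left, inner_sub_right, i11, i22, i33, i44, i12, i13, i14, i23, i24, i34, i21, i31, i41, i32, i42, i43, h1, h2, h3, h4]
  have oB34 : ⟪e₁ - e₃, e₂ - e₄⟫ = 0 := by simp [inner_add_left, inner_add_right, inner_sub_left, inner_sub_right, i11, i22, i33, i44, i12, i13, i14, i23, i24, i34, i21, i31, i41, i32, i42, i43]
  have oC12 : ⟪e₁ + e₄, e₂ - e₃⟫ = 0 := by simp [inner_add_left, inner_add_right, inner_sub_left, inner_sub_right, i11, i22, i33, i44, i12, i13, i14, i23, i24, i34, i21, i31, i41, i32, i42, i43]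
  have oC13 : ⟪e₁ + e₄, e₁ - e₄⟫ = 0 := by simp [inner_add_left, inner_add_right, inner_sub_left, inner_sub_right, i11, i22, i33, i44, i12, i13, i14, i23, i24, i34, i21, i31, i41, i32, i42, i43, h1, h2, h3, h4]
  have oC14 : ⟪e₁ + e₄, e₂ + e₃⟫ = 0 := by simp [inner_add_left, inner_add_right, inner_sub_left, inner_sub_right, i11, i22, i33, i44, i12, i13, i14, i23, i24, i34, i21, i31, i41, i32, i42, i43]
  have oC23 : ⟪e₂ - e₃, e₁ - e₄⟫ = 0 := by simp [inner_add_left, inner_add_right, inner_sub_left, inner_sub_right, i11, i22, i33, i44, i12, i13, i14, i23, i24, i34, i21, i31, i41, i32, i42, i43]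
  have oC24 : ⟪e₂ - e₃, e₂ + e₃⟫ = 0 := by simp [inner_add_left, inner_add_right, inner_sub_left, inner_sub_right, i11, i22, i33, i44, i12, i13, i14, i23, i24, i34, i21, i31, i41, i32, i42, i43, h1, h2, h3, h4]
  have oC34 : ⟪e₁ - e₄, e₂ + e₃⟫ = 0 := by simp [inner_add_left, inner_add_right, inner_sub_left, inner_sub_right, i11, i22, i33, i44, i12, i13, i14, i23, i24, i34, i21, i31, i41, i32, i42, i43]
  have hB := hyp' (e₁ + e₃) (e₂ + e₄) (e₁ - e₃) (e₂ - e₄) (nsum e₁ e₃ h1 h3 i13) (nsum e₂ e₄ h2 h4 i24) (nsub e₁ e₃ h1 h3 i13) (nsub e₂ e₄ h2 h4 i24) oB12 oB13 oB14 oB23 oB24 oB34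
  have hC := hyp' (e₁ + e₄) (e₂ - e₃) (e₁ - e₄) (e₂ + e₃) (nsum e₁ e₄ h1 h4 i14) (nsub e₂ e₃ h2 h3 i23) (nsub e₁ e₄ h1 h4 i14) (nsum e₂ e₃ h2 h3 i23) oC12 oC13 oC14 oC23 oC24 oC34
  have hsub : ∀ x y z w u : V, R (x - y) z w u = R x z w u - R y z w u := by
    intro x y z w u
    rw [sub_eq_add_neg, ← neg_one_smul ℝ y, map_add, map_smul]
    simp only [LinearMap.add_apply, LinearMap.smul_apply, smul_eq_mul]; ring
  simp only [map_add, map_sub, LinearMap.add_apply, LinearMap.sub_apply, hsub] at hB hC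
  have fct1111 : R e₁ e₁ e₁ e₁ = 0 := Z1 e₁ e₁ e₁
  have fct1113 : R e₁ e₁ e₁ e₃ = 0 := Z1 e₁ e₁ e₃
  have fct1114 : R e₁ e₁ e₁ e₄ = 0 := Z1 e₁ e₁ e₄
  have fct1131 : R e₁ e₁ e₃ e₁ = 0 := Z1 e₁ e₃ e₁
  have fct1133 : R e₁ e₁ e₃ e₃ = 0 := Z1 e₁ e₃ e₃
  have fct1141 : R e₁ e₁ e₄ e₁ = 0 := Z1 e₁ e₄ e₁
  have fct1144 : R e₁ e₁ e₄ e₄ = 0 := Z1 e₁ e₄ e₄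
  have fct1212 : R e₁ e₂ e₁ e₂ = R e₁ e₂ e₁ e₂ := A4 e₁ e₂ e₁ e₂
  have fct1232 : R e₁ e₂ e₃ e₂ = -R e₁ e₂ e₂ e₃ := A2 e₁ e₂ e₂ e₃
  have fct1242 : R e₁ e₂ e₄ e₂ = -R e₁ e₂ e₂ e₄ := A2 e₁ e₂ e₂ e₄
  have fct1243 : R e₁ e₂ e₄ e₃ = -R e₁ e₂ e₃ e₄ := A2 e₁ e₂ e₃ e₄
  have fct1311 : R e₁ e₃ e₁ e₁ = 0 := Z2 e₁ e₃ e₁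
  have fct1312 : R e₁ e₃ e₁ e₂ = R e₁ e₂ e₁ e₃ := A4 e₁ e₂ e₁ e₃
  have fct1313 : R e₁ e₃ e₁ e₃ = R e₁ e₃ e₁ e₃ := A4 e₁ e₃ e₁ e₃
  have fct1331 : R e₁ e₃ e₃ e₁ = -R e₁ e₃ e₁ e₃ := A6 e₁ e₃ e₁ e₃
  have fct1333 : R e₁ e₃ e₃ e₃ = 0 := Z2 e₁ e₃ e₃
  have fct1342 : R e₁ e₃ e₄ e₂ = -R e₁ e₃ e₂ e₄ := A2 e₁ e₃ e₂ e₄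
  have fct1343 : R e₁ e₃ e₄ e₃ = -R e₁ e₃ e₃ e₄ := A2 e₁ e₃ e₃ e₄
  have fct1411 : R e₁ e₄ e₁ e₁ = 0 := Z2 e₁ e₄ e₁
  have fct1412 : R e₁ e₄ e₁ e₂ = R e₁ e₂ e₁ e₄ := A4 e₁ e₂ e₁ e₄
  have fct1414 : R e₁ e₄ e₁ e₄ = R e₁ e₄ e₁ e₄ := A4 e₁ e₄ e₁ e₄
  have fct1432 : R e₁ e₄ e₃ e₂ = -R e₁ e₄ e₂ e₃ := A2 e₁ e₄ e₂ e₃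
  have fct1441 : R e₁ e₄ e₄ e₁ = -R e₁ e₄ e₁ e₄ := A6 e₁ e₄ e₁ e₄
  have fct1444 : R e₁ e₄ e₄ e₄ = 0 := Z2 e₁ e₄ e₄
  have fct2121 : R e₂ e₁ e₂ e₁ = R e₁ e₂ e₁ e₂ := A7 e₁ e₂ e₁ e₂
  have fct2123 : R e₂ e₁ e₂ e₃ = -R e₁ e₂ e₂ e₃ := A1 e₁ e₂ e₂ e₃
  have fct2124 : R e₂ e₁ e₂ e₄ = -R e₁ e₂ e₂ e₄ := A1 e₁ e₂ e₂ e₄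
  have fct2131 : R e₂ e₁ e₃ e₁ = R e₁ e₂ e₁ e₃ := A3 e₁ e₂ e₁ e₃
  have fct2134 : R e₂ e₁ e₃ e₄ = -R e₁ e₂ e₃ e₄ := A1 e₁ e₂ e₃ e₄
  have fct2141 : R e₂ e₁ e₄ e₁ = R e₁ e₂ e₁ e₄ := A3 e₁ e₂ e₁ e₄
  have fct2143 : R e₂ e₁ e₄ e₃ = R e₁ e₂ e₃ e₄ := A3 e₁ e₂ e₃ e₄
  have fct2222 : R e₂ e₂ e₂ e₂ = 0 := Z1 e₂ e₂ e₂
  have fct2223 : R e₂ e₂ e₂ e₃ = 0 := Z1 e₂ e₂ e₃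
  have fct2224 : R e₂ e₂ e₂ e₄ = 0 := Z1 e₂ e₂ e₄
  have fct2232 : R e₂ e₂ e₃ e₂ = 0 := Z1 e₂ e₃ e₂
  have fct2233 : R e₂ e₂ e₃ e₃ = 0 := Z1 e₂ e₃ e₃
  have fct2242 : R e₂ e₂ e₄ e₂ = 0 := Z1 e₂ e₄ e₂
  have fct2244 : R e₂ e₂ e₄ e₄ = 0 := Z1 e₂ e₄ e₄
  have fct2321 : R e₂ e₃ e₂ e₁ = -R e₁ e₂ e₂ e₃ := A6 e₁ e₂ e₂ e₃
  have fct2322 : R e₂ e₃ e₂ e₂ = 0 := Z2 e₂ e₃ e₂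
  have fct2323 : R e₂ e₃ e₂ e₃ = R e₂ e₃ e₂ e₃ := A4 e₂ e₃ e₂ e₃
  have fct2332 : R e₂ e₃ e₃ e₂ = -R e₂ e₃ e₂ e₃ := A6 e₂ e₃ e₂ e₃
  have fct2333 : R e₂ e₃ e₃ e₃ = 0 := Z2 e₂ e₃ e₃
  have fct2341 : R e₂ e₃ e₄ e₁ = -R e₁ e₄ e₂ e₃ := A6 e₁ e₄ e₂ e₃
  have fct2343 : R e₂ e₃ e₄ e₃ = -R e₂ e₃ e₃ e₄ := A2 e₂ e₃ e₃ e₄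
  have fct2421 : R e₂ e₄ e₂ e₁ = -R e₁ e₂ e₂ e₄ := A6 e₁ e₂ e₂ e₄
  have fct2422 : R e₂ e₄ e₂ e₂ = 0 := Z2 e₂ e₄ e₂
  have fct2424 : R e₂ e₄ e₂ e₄ = R e₂ e₄ e₂ e₄ := A4 e₂ e₄ e₂ e₄
  have fct2431 : R e₂ e₄ e₃ e₁ = -R e₁ e₃ e₂ e₄ := A6 e₁ e₃ e₂ e₄
  have fct2442 : R e₂ e₄ e₄ e₂ = -R e₂ e₄ e₂ e₄ := A6 e₂ e₄ e₂ e₄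
  have fct2444 : R e₂ e₄ e₄ e₄ = 0 := Z2 e₂ e₄ e₄
  have fct3111 : R e₃ e₁ e₁ e₁ = 0 := Z2 e₃ e₁ e₁
  have fct3113 : R e₃ e₁ e₁ e₃ = -R e₁ e₃ e₁ e₃ := A5 e₁ e₃ e₁ e₃
  have fct3121 : R e₃ e₁ e₂ e₁ = R e₁ e₂ e₁ e₃ := A7 e₁ e₂ e₁ e₃
  have fct3124 : R e₃ e₁ e₂ e₄ = -R e₁ e₃ e₂ e₄ := A1 e₁ e₃ e₂ e₄
  have fct3131 : R e₃ e₁ e₃ e₁ = R e₁ e₃ e₁ e₃ := A7 e₁ e₃ e₁ e₃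
  have fct3133 : R e₃ e₁ e₃ e₃ = 0 := Z2 e₃ e₁ e₃
  have fct3134 : R e₃ e₁ e₃ e₄ = -R e₁ e₃ e₃ e₄ := A1 e₁ e₃ e₃ e₄
  have fct3212 : R e₃ e₂ e₁ e₂ = -R e₁ e₂ e₂ e₃ := A5 e₁ e₂ e₂ e₃
  have fct3214 : R e₃ e₂ e₁ e₄ = -R e₁ e₄ e₂ e₃ := A5 e₁ e₄ e₂ e₃
  have fct3222 : R e₃ e₂ e₂ e₂ = 0 := Z2 e₃ e₂ e₂
  have fct3223 : R e₃ e₂ e₂ e₃ = -R e₂ e₃ e₂ e₃ := A5 e₂ e₃ e₂ e₃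
  have fct3232 : R e₃ e₂ e₃ e₂ = R e₂ e₃ e₂ e₃ := A7 e₂ e₃ e₂ e₃
  have fct3233 : R e₃ e₂ e₃ e₃ = 0 := Z2 e₃ e₂ e₃
  have fct3234 : R e₃ e₂ e₃ e₄ = -R e₂ e₃ e₃ e₄ := A1 e₂ e₃ e₃ e₄
  have fct3311 : R e₃ e₃ e₁ e₁ = 0 := Z1 e₃ e₁ e₁
  have fct3313 : R e₃ e₃ e₁ e₃ = 0 := Z1 e₃ e₁ e₃
  have fct3322 : R e₃ e₃ e₂ e₂ = 0 := Z1 e₃ e₂ e₂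
  have fct3323 : R e₃ e₃ e₂ e₃ = 0 := Z1 e₃ e₂ e₃
  have fct3331 : R e₃ e₃ e₃ e₁ = 0 := Z1 e₃ e₃ e₁
  have fct3332 : R e₃ e₃ e₃ e₂ = 0 := Z1 e₃ e₃ e₂
  have fct3333 : R e₃ e₃ e₃ e₃ = 0 := Z1 e₃ e₃ e₃
  have fct3412 : R e₃ e₄ e₁ e₂ = R e₁ e₂ e₃ e₄ := A4 e₁ e₂ e₃ e₄
  have fct3414 : R e₃ e₄ e₁ e₄ = R e₁ e₄ e₃ e₄ := A4 e₁ e₄ e₃ e₄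
  have fct3421 : R e₃ e₄ e₂ e₁ = -R e₁ e₂ e₃ e₄ := A6 e₁ e₂ e₃ e₄
  have fct3424 : R e₃ e₄ e₂ e₄ = R e₂ e₄ e₃ e₄ := A4 e₂ e₄ e₃ e₄
  have fct3431 : R e₃ e₄ e₃ e₁ = -R e₁ e₃ e₃ e₄ := A6 e₁ e₃ e₃ e₄
  have fct3432 : R e₃ e₄ e₃ e₂ = -R e₂ e₃ e₃ e₄ := A6 e₂ e₃ e₃ e₄
  have fct3434 : R e₃ e₄ e₃ e₄ = R e₃ e₄ e₃ e₄ := A4 e₃ e₄ e₃ e₄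
  have fct4111 : R e₄ e₁ e₁ e₁ = 0 := Z2 e₄ e₁ e₁
  have fct4114 : R e₄ e₁ e₁ e₄ = -R e₁ e₄ e₁ e₄ := A5 e₁ e₄ e₁ e₄
  have fct4121 : R e₄ e₁ e₂ e₁ = R e₁ e₂ e₁ e₄ := A7 e₁ e₂ e₁ e₄
  have fct4123 : R e₄ e₁ e₂ e₃ = -R e₁ e₄ e₂ e₃ := A1 e₁ e₄ e₂ e₃
  have fct4141 : R e₄ e₁ e₄ e₁ = R e₁ e₄ e₁ e₄ := A7 e₁ e₄ e₁ e₄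
  have fct4143 : R e₄ e₁ e₄ e₃ = R e₁ e₄ e₃ e₄ := A3 e₁ e₄ e₃ e₄
  have fct4144 : R e₄ e₁ e₄ e₄ = 0 := Z2 e₄ e₁ e₄
  have fct4212 : R e₄ e₂ e₁ e₂ = -R e₁ e₂ e₂ e₄ := A5 e₁ e₂ e₂ e₄
  have fct4213 : R e₄ e₂ e₁ e₃ = -R e₁ e₃ e₂ e₄ := A5 e₁ e₃ e₂ e₄
  have fct4222 : R e₄ e₂ e₂ e₂ = 0 := Z2 e₄ e₂ e₂
  have fct4224 : R e₄ e₂ e₂ e₄ = -R e₂ e₄ e₂ e₄ := A5 e₂ e₄ e₂ e₄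
  have fct4242 : R e₄ e₂ e₄ e₂ = R e₂ e₄ e₂ e₄ := A7 e₂ e₄ e₂ e₄
  have fct4243 : R e₄ e₂ e₄ e₃ = R e₂ e₄ e₃ e₄ := A3 e₂ e₄ e₃ e₄
  have fct4244 : R e₄ e₂ e₄ e₄ = 0 := Z2 e₄ e₂ e₄
  have fct4312 : R e₄ e₃ e₁ e₂ = -R e₁ e₂ e₃ e₄ := A5 e₁ e₂ e₃ e₄
  have fct4313 : R e₄ e₃ e₁ e₃ = -R e₁ e₃ e₃ e₄ := A5 e₁ e₃ e₃ e₄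
  have fct4321 : R e₄ e₃ e₂ e₁ = R e₁ e₂ e₃ e₄ := A7 e₁ e₂ e₃ e₄
  have fct4323 : R e₄ e₃ e₂ e₃ = -R e₂ e₃ e₃ e₄ := A5 e₂ e₃ e₃ e₄
  have fct4341 : R e₄ e₃ e₄ e₁ = R e₁ e₄ e₃ e₄ := A7 e₁ e₄ e₃ e₄
  have fct4342 : R e₄ e₃ e₄ e₂ = R e₂ e₄ e₃ e₄ := A7 e₂ e₄ e₃ e₄
  have fct4343 : R e₄ e₃ e₄ e₃ = R e₃ e₄ e₃ e₄ := A7 e₃ e₄ e₃ e₄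
  have fct4411 : R e₄ e₄ e₁ e₁ = 0 := Z1 e₄ e₁ e₁
  have fct4414 : R e₄ e₄ e₁ e₄ = 0 := Z1 e₄ e₁ e₄
  have fct4422 : R e₄ e₄ e₂ e₂ = 0 := Z1 e₄ e₂ e₂
  have fct4424 : R e₄ e₄ e₂ e₄ = 0 := Z1 e₄ e₂ e₄
  have fct4441 : R e₄ e₄ e₄ e₁ = 0 := Z1 e₄ e₄ e₁
  have fct4442 : R e₄ e₄ e₄ e₂ = 0 := Z1 e₄ e₄ e₂
  have fct4444 : R e₄ e₄ e₄ e₄ = 0 := Z1 e₄ e₄ e₄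
  simp only [fct1111, fct1113, fct1114, fct1131, fct1133, fct1141, fct1144, fct1212, fct1232, fct1242, fct1243, fct1311, fct1312, fct1313, fct1331, fct1333, fct1342, fct1343, fct1411, fct1412, fct1414, fct1432, fct1441, fct1444, fct2121, fct2123, fct2124, fct2131, fct2134, fct2141, fct2143, fct2222, fct2223, fct2224, fct2232, fct2233, fct2242, fct2244, fct2321, fct2322, fct2323, fct2332, fct2333, fct2341, fct2343, fct2421, fct2422, fct2424, fct2431, fct2442, fct2444, fct3111, fct3113, fct3121, fct3124, fct3131, fct3133, fct3134, fct3212, fct3214, fct3222, fct3223, fct3232, fct3233, fct3234, fct3311, fct3313, fct3322, fct3323, fct3331, fct3332, fct3333, fct3412, fct3414, fct3421, fct3424, fct3431, fct3432, fct3434, fct4111, fct4114, fct4121, fct4123, fct4141, fct4143, fct4144, fct4212, fct4213, fct4222, fct4224, fct4242, fct4243, fct4244, fct4312, fct4313, fct4321, fct4323, fct4341, fct4342, fct4343, fct4411, fct4414, fct4422, fct4424, fct4441, fct4442, fct4444] at hB hC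
  have hbi := hbianchi e₁ e₂ e₃ e₄
  have hbi2 : R e₁ e₃ e₄ e₂ = -R e₁ e₃ e₂ e₄ := A2 e₁ e₃ e₂ e₄
  linarith
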